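/- Let H be a group, m : H → ℝ a nonzero homogeneous quasimorphism with defect D, and C > 2D a constant such that some value of m lies in (0, C/2). Then the set τ = {g ∈ H : |m(g)| < C} generates H. -/

import Mathlib

/-- If `m` is a nonzero homogeneous quasimorphism with defect `D`,
`C > 2D`, and some value of `m` lies in `(0, C/2)`, then
`τ = {g : |m g| < C}` generates `H`. -/
theorem quasimorphism_sublevel_generates {H : Type*} [Group H] (m : H → ℝ) (D : ℝ)
    (hD : ∀ h k : H, |m (h * k) - m h - m k| ≤ D)
    (hhom : ∀ (h : H) (n : ℤ), m (h ^ n) = (n : ℝ) * m h)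
    (hm : m ≠ 0)
    (C : ℝ) (hC : 2 * D < C)
    (hval : ∃ h : H, m h ∈ Set.Ioo 0 (C / 2)) :
    Subgroup.closure {g : H | |m g| < C} = ⊤ := by
  obtain ⟨h, hh0, hh2⟩ := hval
  have hm1 : m 1 = 0 := by simpa using hhom 1 0
  have hD0 : 0 ≤ D := by
    have := hD 1 1
    rw [one_mul, hm1] at this
    simpa using this
  have hDC : D < C / 2 := by linarith
  rw [eq_top_iff]
  intro g _
  set n : ℤ := round (m g / m h) with hn
  have hmh : m h ≠ 0 := ne_of_gt hh0
  have hbound : |m g - (n : ℝ) * m h| ≤ m h / 2 := by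
    have h1 : |m g / m h - (n : ℝ)| ≤ 1 / 2 := abs_sub_round _
    have : m g - (n : ℝ) * m h = (m g / m h - (n : ℝ)) * m h := by
      field_simp
    rw [this, abs_mul, abs_of_pos hh0]
    calc |m g / m h - (n : ℝ)| * m h ≤ (1 / 2) * m h := by
          exact mul_le_mul_of_nonneg_right h1 (le_of_lt hh0)
      _ = m h / 2 := by ring
  have key : |m (g * h ^ (-n))| < C := by
    have := hD g (h ^ (-n))
    have hz : m (h ^ (-n)) = (-n : ℝ) * m h := by
      rw [hhom h (-n)]; push_cast; ring
    rw [hz] at this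
    have : |m (g * h ^ (-n))| ≤ |m g - (n : ℝ) * m h| + D := by
      have := abs_sub_abs_le_abs_sub (m (g * h ^ (-n))) (m g + (-n : ℝ) * m h)
      calc |m (g * h ^ (-n))| ≤ |m g + (-n : ℝ) * m h| + |m (g * h ^ (-n)) - (m g + (-n : ℝ) * m h)| := by
            have := abs_add_le (m g + (-n : ℝ) * m h) (m (g * h ^ (-n)) - (m g + (-n : ℝ) * m h))
            simpa using this
        _ ≤ |m g - (n : ℝ) * m h| + D := by
            have e1 : m g + (-n : ℝ) * m h = m g - (n : ℝ) * m h := by ring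
            have e2 : m (g * h ^ (-n)) - (m g - (n : ℝ) * m h)
                = m (g * h ^ (-n)) - m g - (-n : ℝ) * m h := by ring
            rw [e1, e2]
            exact add_le_add le_rfl ‹|m (g * h ^ (-n)) - m g - (-n : ℝ) * m h| ≤ D›
    have hmh2 : m h / 2 < C / 4 := by linarith [hh2]
    calc |m (g * h ^ (-n))| ≤ |m g - (n : ℝ) * m h| + D := this
      _ ≤ m h / 2 + D := by linarith
      _ < C / 4 + C / 2 := by linarith
      _ ≤ C := by linarith [lt_trans (lt_of_le_of_lt hD0 hDC) (by linarith : C/2 < C)]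
  have hgh : g = (g * h ^ (-n)) * h ^ n := by group
  rw [hgh]
  exact mul_mem (Subgroup.subset_closure key)
    (zpow_mem (Subgroup.subset_closure (by
      simp only [Set.mem_setOf_eq]
      rw [abs_of_pos hh0]; linarith)) n)
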